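/- With S(k^{N−j},(k+1)^j) defined as the set of N-tuples (i_0,…,i_{N−1}) of nonnegative integers satisfying ∑_{p=0}^{N−1}(N!/(N−p))·i_p ≤ N!·k − ∑_{ℓ=0}^{N−4}(N!/(N−ℓ)!)(N−ℓ−2)!·b_ℓ + j(N−1)! (with b_ℓ as in the paper's congruence recursion), the cardinality of S(k^{N−j},(k+1)^j) equals (k+1)^{N−j}·(k+2)^{j}. -/

import Mathlib

/-- The auxiliary residues `b_ℓ` from the congruence recursion defining
`S(k^{N−j},(k+1)^j)`: `0 ≤ b_ℓ < N − ℓ`, `i_0 − j ≡ b_0 (mod N)` and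
`i_ℓ + (b_{ℓ−1} mod (N−ℓ)) ≡ b_ℓ (mod (N−ℓ))`. -/
def bres (N j : ℕ) (i : ℕ → ℕ) : ℕ → ℕ
  | 0 => (((i 0 : ℤ) - (j : ℤ)) % (N : ℤ)).toNat
  | ℓ + 1 => (i (ℓ + 1) + bres N j i ℓ % (N - (ℓ + 1))) % (N - (ℓ + 1))

/-- The set `S(k^{N−j},(k+1)^j)` of `N`-tuples `(i_0,…,i_{N−1})` of nonnegative
integers satisfying
`∑_{p=0}^{N−1} (N!/(N−p))·i_p ≤ N!·k − ∑_{ℓ=0}^{N−4} (N!/(N−ℓ)!)·(N−ℓ−2)!·b_ℓ + j·(N−1)!`. -/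
def Sset (N j k : ℕ) : Set (Fin N → ℕ) :=
  {x | ∀ i : ℕ → ℕ, (∀ p : Fin N, i p = x p) → (∀ p, N ≤ p → i p = 0) →
    ((∑ p ∈ Finset.range N, (N.factorial / (N - p)) * i p : ℕ) : ℤ) ≤
      (N.factorial * k : ℤ)
        - ∑ ℓ ∈ Finset.range (N - 3),
            ((N.factorial / (N - ℓ).factorial) * (N - ℓ - 2).factorial * bres N j i ℓ : ℕ)
        + (j * (N - 1).factorial : ℤ)}

namespace SP

/-- canonical extension of a tuple by zeros -/
def ext {N : ℕ} (x : Fin N → ℕ) : ℕ → ℕ := fun p => if h : p < N then x ⟨p, h⟩ else 0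

lemma ext_lt {N : ℕ} (x : Fin N → ℕ) {p : ℕ} (h : p < N) : ext x p = x ⟨p, h⟩ := dif_pos h

lemma ext_fin {N : ℕ} (x : Fin N → ℕ) (p : Fin N) : ext x p = x p := by
  rw [ext_lt x p.isLt]

lemma ext_ge {N : ℕ} (x : Fin N → ℕ) {p : ℕ} (h : N ≤ p) : ext x p = 0 :=
  dif_neg (by omega)

lemma bres_congr {N j : ℕ} {i i' : ℕ → ℕ} {ℓ : ℕ} (h : ∀ m, m ≤ ℓ → i m = i' m) :
    bres N j i ℓ = bres N j i' ℓ := by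
  induction ℓ with
  | zero => simp only [bres, h 0 le_rfl]
  | succ m ih =>
      simp only [bres, h (m+1) le_rfl, ih (fun p hp => h p (hp.trans (Nat.le_succ m)))]

/-- The defining condition, on an "extended" tuple. -/
def Cond (N j k : ℕ) (i : ℕ → ℕ) : Prop :=
  ((∑ p ∈ Finset.range N, (N.factorial / (N - p)) * i p : ℕ) : ℤ) ≤
    (N.factorial * k : ℤ)
      - ∑ ℓ ∈ Finset.range (N - 3),
          ((N.factorial / (N - ℓ).factorial) * (N - ℓ - 2).factorial * bres N j i ℓ : ℕ)
      + (j * (N - 1).factorial : ℤ)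

lemma mem_Sset_iff {N j k : ℕ} (x : Fin N → ℕ) : x ∈ Sset N j k ↔ Cond N j k (ext x) := by
  constructor
  · intro hx
    exact hx (ext x) (fun p => ext_fin x p) (fun p hp => ext_ge x hp)
  · intro hc i hfin hge
    have hie : i = ext x := by
      funext p
      by_cases h : p < N
      · rw [ext_lt x h]
        have := hfin ⟨p, h⟩
        simpa using this
      · rw [ext_ge x (by omega)]
        exact hge p (by omega)
    rw [hie]
    exact hc

def CondN (N j k : ℕ) (i : ℕ → ℕ) : Prop :=
  (∑ p ∈ Finset.range N, (N.factorial / (N - p)) * i p)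
    + (∑ ℓ ∈ Finset.range (N - 3),
        (N.factorial / (N - ℓ).factorial) * (N - ℓ - 2).factorial * bres N j i ℓ)
    ≤ N.factorial * k + j * (N - 1).factorial

lemma cond_iff (N j k : ℕ) (i : ℕ → ℕ) : Cond N j k i ↔ CondN N j k i := by
  unfold Cond CondN
  push_cast
  constructor <;> intro h <;> linarith
instance (N j k : ℕ) (i : ℕ → ℕ) : Decidable (CondN N j k i) :=
  inferInstanceAs (Decidable (_ ≤ _))

lemma ext_tail {n : ℕ} (x : Fin (n+1) → ℕ) (p : ℕ) : ext (Fin.tail x) p = ext x (p+1) := by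
  by_cases h : p < n
  · rw [ext_lt (Fin.tail x) h, ext_lt x (by omega : p + 1 < n + 1)]
    show x (Fin.succ ⟨p, h⟩) = _
    congr 1
  · rw [ext_ge (Fin.tail x) (by omega), ext_ge x (by omega)]

/-- The key integer `K = n(k - a₀) - b₀`. -/
def Kv (n j k i0 : ℕ) : ℤ :=
  (n : ℤ) * ((k : ℤ) - ((i0 : ℤ) - (j : ℤ)) / ((n : ℤ) + 1)) - ((i0 : ℤ) - (j : ℤ)) % ((n : ℤ) + 1)

def jv (n j k i0 : ℕ) : ℕ := ((Kv n j k i0) % (n : ℤ)).toNat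
def kv (n j k i0 : ℕ) : ℤ := (Kv n j k i0) / (n : ℤ)

lemma jv_lt {n j k i0 : ℕ} (hn : 1 ≤ n) : jv n j k i0 < n := by
  have h := Int.emod_lt_of_pos (Kv n j k i0) (by exact_mod_cast hn : (0:ℤ) < n)
  have h2 := Int.emod_nonneg (Kv n j k i0) (by omega : (n:ℤ) ≠ 0)
  unfold jv; omega

lemma Kv_eq {n j k i0 : ℕ} (hn : 1 ≤ n) :
    Kv n j k i0 = (n : ℤ) * kv n j k i0 + (jv n j k i0 : ℕ) := by
  have h2 := Int.emod_nonneg (Kv n j k i0) (by omega : (n:ℤ) ≠ 0)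
  have := Int.mul_ediv_add_emod (Kv n j k i0) (n : ℤ)
  unfold jv kv; omega

lemma bres_zero {n j : ℕ} (x : Fin (n+1) → ℕ) :
    (bres (n+1) j (ext x) 0 : ℤ) = ((x 0 : ℤ) - (j : ℤ)) % ((n:ℤ)+1) := by
  show ((((ext x 0 : ℤ) - (j : ℤ)) % ((n+1 : ℕ) : ℤ)).toNat : ℤ) = _
  rw [ext_lt x (Nat.succ_pos n)]
  rw [Int.toNat_of_nonneg (Int.emod_nonneg _ (by positivity))]
  push_cast
  norm_num

lemma bres_shift {n j k : ℕ} (hn : 1 ≤ n) (x : Fin (n+1) → ℕ) (ℓ : ℕ) :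
    bres (n+1) j (ext x) (ℓ+1) = bres n (jv n j k (x 0)) (ext (Fin.tail x)) ℓ := by
  induction ℓ with
  | zero =>
      have hnz : (n : ℤ) ≠ 0 := by omega
      show (ext x 1 + bres (n+1) j (ext x) 0 % (n+1-1)) % (n+1-1)
        = ((((ext (Fin.tail x) 0 : ℤ) - (jv n j k (x 0) : ℤ)) % (n : ℤ)).toNat)
      rw [ext_tail]
      simp only [Nat.add_sub_cancel]
      set X1 := ext x 1 with hX1
      have hb0 : (bres (n+1) j (ext x) 0 : ℤ) = ((x 0 : ℤ) - (j : ℤ)) % ((n:ℤ)+1) := bres_zero x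
      set b : ℤ := ((x 0 : ℤ) - (j : ℤ)) % ((n:ℤ)+1) with hbdef
      have hjv : ((jv n j k (x 0) : ℕ) : ℤ) % n = (-b) % n := by
        have hj : (jv n j k (x 0) : ℤ) = Kv n j k (x 0) % n := by
          unfold jv
          rw [Int.toNat_of_nonneg (Int.emod_nonneg _ hnz)]
        rw [hj, Int.emod_emod_of_dvd _ dvd_rfl]
        unfold Kv
        rw [← hbdef]
        conv_lhs => rw [show (n:ℤ) * ((k:ℤ) - ((x 0:ℤ) - j)/((n:ℤ)+1)) - b
          = -b + ((k:ℤ) - ((x 0:ℤ) - j)/((n:ℤ)+1)) * n by ring]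
        rw [Int.add_mul_emod_self_right]
      have h1 : ((X1:ℤ) - (jv n j k (x 0) : ℕ)) % n = ((X1:ℤ) + b) % n := by
        have hm : (jv n j k (x 0) : ℤ) ≡ -b [ZMOD (n:ℤ)] := hjv
        have := (Int.ModEq.refl (X1:ℤ)).sub hm
        simpa [sub_neg_eq_add, Int.ModEq] using this
      have h2 : (((X1 + bres (n+1) j (ext x) 0 % n) % n : ℕ) : ℤ) = ((X1:ℤ) + b) % n := by
        push_cast [Int.natCast_mod]
        rw [hb0]
        rw [Int.add_emod (X1:ℤ) b, Int.add_emod (X1:ℤ) (b % n), Int.emod_emod_of_dvd _ dvd_rfl]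
      omega
  | succ m ih =>
      show (ext x (m+2) + bres (n+1) j (ext x) (m+1) % (n+1-(m+2))) % (n+1-(m+2)) = _
      rw [show bres n (jv n j k (x 0)) (ext (Fin.tail x)) (m+1)
        = (ext (Fin.tail x) (m+1) + bres n (jv n j k (x 0)) (ext (Fin.tail x)) m % (n-(m+1))) % (n-(m+1)) from rfl]
      rw [ext_tail, ih, show n+1-(m+2) = n-(m+1) by omega]
lemma peel {n j k : ℕ} (hn : 1 ≤ n) (x : Fin (n+1) → ℕ) :
    CondN (n+1) j k (ext x) ↔
      0 ≤ kv n j k (x 0) ∧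
        CondN n (jv n j k (x 0)) ((kv n j k (x 0)).toNat) (ext (Fin.tail x)) := by
  have hnz : ((n:ℤ)) ≠ 0 := by omega
  set i0 := x 0 with hi0def
  set a : ℤ := ((i0:ℤ) - j) / ((n:ℤ)+1) with ha
  set b : ℤ := ((i0:ℤ) - j) % ((n:ℤ)+1) with hb
  have hbnn : 0 ≤ b := Int.emod_nonneg _ (by omega)
  have hblt : b < (n:ℤ)+1 := Int.emod_lt_of_pos _ (by omega)
  have hi0 : (i0:ℤ) = ((n:ℤ)+1)*a + b + (j:ℤ) := by
    have h := Int.mul_ediv_add_emod ((i0:ℤ) - (j:ℤ)) ((n:ℤ)+1)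
    rw [← ha, ← hb] at h
    omega
  set K := Kv n j k i0 with hKdef
  have hKab : K = (n:ℤ) * ((k:ℤ) - a) - b := rfl
  set jj := jv n j k i0 with hjj
  set kk := kv n j k i0 with hkk
  have hKjj : K = (n:ℤ) * kk + (jj:ℤ) := Kv_eq hn
  have hjjlt : jj < n := jv_lt hn
  set F1 : ℤ := ((n-1).factorial : ℤ) with hF1
  have hF1pos : 0 < F1 := by rw [hF1]; exact_mod_cast Nat.factorial_pos (n-1)
  have hF2 : ((n.factorial : ℕ) : ℤ) = (n:ℤ) * F1 := by
    obtain ⟨m, rfl⟩ : ∃ m, n = m + 1 := ⟨n - 1, by omega⟩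
    rw [hF1]
    push_cast [Nat.factorial_succ]
    norm_num
  have hF3 : (((n+1).factorial : ℕ) : ℤ) = ((n:ℤ)+1) * ((n.factorial : ℕ) : ℤ) := by
    push_cast [Nat.factorial_succ]; ring
  -- the head sums
  set S' : ℕ := ∑ p ∈ Finset.range n, (n.factorial / (n-p)) * ext (Fin.tail x) p with hS'
  set B' : ℕ := ∑ ℓ ∈ Finset.range (n-3),
      (n.factorial / (n-ℓ).factorial) * (n-ℓ-2).factorial * bres n jj (ext (Fin.tail x)) ℓ with hB'
  set bres0 : ℕ := bres (n+1) j (ext x) 0 with hbres0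
  have hb0 : (bres0 : ℤ) = b := bres_zero x
  have hS1 : ∑ p ∈ Finset.range (n+1), ((n+1).factorial / (n+1-p)) * ext x p
      = (n+1) * S' + n.factorial * i0 := by
    rw [Finset.sum_range_succ']
    congr 1
    · rw [hS', Finset.mul_sum]
      apply Finset.sum_congr rfl
      intro p hp
      have hp' : p < n := Finset.mem_range.mp hp
      have hd : (n - p) ∣ n.factorial := Nat.dvd_factorial (by omega) (by omega)
      rw [show n+1-(p+1) = n-p by omega, Nat.factorial_succ, Nat.mul_div_assoc _ hd,
        ext_tail, mul_assoc]
    · rw [show n+1-0 = n+1 by omega, Nat.factorial_succ,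
        Nat.mul_div_cancel_left _ (Nat.succ_pos n), ext_lt x (Nat.succ_pos n)]
      congr 1
  set bn : ℕ := if 3 ≤ n then (n-1).factorial * bres0 else 0 with hbn
  have hbz : (bn : ℤ) = if 3 ≤ n then F1 * b else 0 := by
    by_cases h3 : 3 ≤ n <;> simp only [hbn, h3, if_true, if_false]
    · push_cast
      rw [hb0, ← hF1]
    · simp
  have hBT : ∑ ℓ ∈ Finset.range (n+1-3),
      ((n+1).factorial / (n+1-ℓ).factorial) * (n+1-ℓ-2).factorial * bres (n+1) j (ext x) ℓ
      = (n+1) * B' + bn := by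
    by_cases h3 : 3 ≤ n
    · rw [show n+1-3 = (n-3)+1 by omega, Finset.sum_range_succ']
      congr 1
      · rw [hB', Finset.mul_sum]
        apply Finset.sum_congr rfl
        intro ℓ hℓ
        have hℓ' : ℓ < n - 3 := Finset.mem_range.mp hℓ
        have hd : (n - ℓ).factorial ∣ n.factorial :=
          Nat.factorial_dvd_factorial (by omega)
        rw [show n+1-(ℓ+1) = n-ℓ by omega,
          Nat.factorial_succ, Nat.mul_div_assoc _ hd, bres_shift hn x ℓ]
        ring
      · rw [hbn, if_pos h3, show n+1-0 = n+1 by omega, Nat.div_self (Nat.factorial_pos (n+1)),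
          show n+1-2 = n-1 by omega, one_mul, hbres0]
    · rw [show n+1-3 = 0 by omega] at *
      rw [hB', show n-3 = 0 by omega]
      simp [hbn, h3]
  have main : CondN (n+1) j k (ext x) ↔
      ((n:ℤ)+1) * ((S' + B' : ℕ) : ℤ) ≤
        (((n+1).factorial : ℕ) : ℤ) * k + (j:ℤ) * ((n.factorial : ℕ) : ℤ)
          - ((n.factorial : ℕ):ℤ) * (i0:ℤ) - (bn : ℤ) := by
    unfold CondN
    rw [hS1, hBT, show (n+1) - 1 = n by omega]
    zify
    push_cast
    constructor <;> intro h <;> linarith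
  have hRid : (((n+1).factorial : ℕ) : ℤ) * k + (j:ℤ) * ((n.factorial : ℕ) : ℤ)
          - ((n.factorial : ℕ):ℤ) * (i0:ℤ) - (bn : ℤ)
      = ((n:ℤ)+1) * (F1 * K) + (if 3 ≤ n then 0 else F1*b) := by
    rw [hbz]
    by_cases h3 : 3 ≤ n <;> simp only [h3, if_true, if_false] <;>
      rw [hF3, hF2, hi0, hKab] <;> ring
  have hfone : ¬ 3 ≤ n → F1 = 1 := by
    intro h3
    rw [hF1, Nat.factorial_eq_one.mpr (by omega)]
    norm_num
  have hrnn : 0 ≤ (if 3 ≤ n then (0:ℤ) else F1*b) := by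
    by_cases h3 : 3 ≤ n <;> simp only [h3, if_true, if_false]
    · exact le_refl 0
    · exact mul_nonneg (le_of_lt hF1pos) hbnn
  have hrlt : (if 3 ≤ n then (0:ℤ) else F1*b) < (n:ℤ)+1 := by
    by_cases h3 : 3 ≤ n <;> simp only [h3, if_true, if_false]
    · omega
    · rw [hfone h3]; omega
  have step2 : (((n:ℤ)+1) * ((S' + B' : ℕ) : ℤ) ≤
        ((n:ℤ)+1) * (F1 * K) + (if 3 ≤ n then 0 else F1*b)) ↔
      ((S' + B' : ℕ) : ℤ) ≤ F1 * K := by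
    constructor <;> intro h
    · have h' : ((n:ℤ)+1) * ((S' + B' : ℕ) : ℤ) < ((n:ℤ)+1) * (F1 * K + 1) := by
        have : ((n:ℤ)+1) * (F1 * K + 1) = ((n:ℤ)+1) * (F1 * K) + ((n:ℤ)+1) := by ring
        linarith
      have h'' := lt_of_mul_lt_mul_left h' (by omega : (0:ℤ) ≤ (n:ℤ)+1)
      omega
    · have h' := mul_le_mul_of_nonneg_left h (by omega : (0:ℤ) ≤ (n:ℤ)+1)
      linarith
  have hYnn : (0:ℤ) ≤ ((S' + B' : ℕ) : ℤ) := by positivity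
  have step3 : (((S' + B' : ℕ) : ℤ) ≤ F1 * K) ↔
      (0 ≤ kk ∧ ((S' + B' : ℕ) : ℤ) ≤ ((n.factorial : ℕ) : ℤ) * kk + (jj:ℤ) * F1) := by
    have hconv : F1 * K = ((n.factorial : ℕ) : ℤ) * kk + (jj:ℤ) * F1 := by
      rw [hKjj, hF2]; ring
    constructor
    · intro h
      have hK0 : 0 ≤ K := by
        by_contra hc
        push_neg at hc
        have : F1 * K < 0 := mul_neg_of_pos_of_neg hF1pos hc
        linarith
      have hkk0 : 0 ≤ kk := by
        by_contra hc
        push_neg at hc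
        have hc1 : kk ≤ -1 := by omega
        have hmul : (n:ℤ) * kk ≤ (n:ℤ) * (-1) :=
          mul_le_mul_of_nonneg_left hc1 (by omega : (0:ℤ) ≤ n)
        have hjj' : (jj:ℤ) < n := by exact_mod_cast hjjlt
        have : K < 0 := by rw [hKjj]; linarith
        omega
      rw [hconv] at h
      exact ⟨hkk0, h⟩
    · rintro ⟨hkk0, h⟩
      rw [hconv]
      exact h
  have sub : (0 ≤ kk) → (CondN n jj (kk.toNat) (ext (Fin.tail x)) ↔
      ((S' + B' : ℕ) : ℤ) ≤ ((n.factorial : ℕ) : ℤ) * kk + (jj:ℤ) * F1) := by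
    intro hkk0
    unfold CondN
    rw [← hS', ← hB']
    zify
    push_cast
    rw [Int.toNat_of_nonneg hkk0, ← hF1]
  rw [main, hRid, step2, step3]
  constructor
  · rintro ⟨h1, h2⟩
    exact ⟨h1, (sub h1).mpr h2⟩
  · rintro ⟨h1, h2⟩
    exact ⟨h1, (sub h1).mp h2⟩
def g (n j k i0 : ℕ) : ℕ :=
  if 0 ≤ kv n j k i0 then
    ((kv n j k i0).toNat + 1) ^ (n - jv n j k i0) * ((kv n j k i0).toNat + 2) ^ (jv n j k i0)
  else 0

private lemma dm (a c q r : ℤ) (h0 : 0 < c) (he : a = c*q + r) (hr0 : 0 ≤ r) (hrb : r < c) :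
    a / c = q ∧ a % c = r :=
  Int.ediv_emod_unique h0 |>.mpr ⟨by omega, hr0, hrb⟩

lemma Kv_shift_j (n j k i0 : ℕ) : Kv n (j+1) k (i0+1) = Kv n j k i0 := by
  unfold Kv
  have h : ((i0+1 : ℕ) : ℤ) - ((j+1 : ℕ) : ℤ) = (i0 : ℤ) - (j : ℤ) := by push_cast; ring
  rw [h]

lemma g_shift_j (n j k i0 : ℕ) : g n (j+1) k (i0+1) = g n j k i0 := by
  unfold g jv kv
  rw [Kv_shift_j]

lemma Kv_head (n j k : ℕ) (hj : j < n) : Kv n (j+1) k 0 = (n : ℤ) * k + j := by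
  unfold Kv
  have h := dm (((0:ℕ):ℤ) - ((j+1:ℕ):ℤ)) ((n:ℤ)+1) (-1) ((n:ℤ) - j)
    (by omega) (by push_cast; ring) (by omega) (by omega)
  rw [h.1, h.2]
  ring

lemma g_head (n j k : ℕ) (hj : j < n) : g n (j+1) k 0 = (k+1)^(n-j) * (k+2)^j := by
  have hK := Kv_head n j k hj
  have h := dm ((n:ℤ)*k + j) (n:ℤ) (k:ℤ) (j:ℤ) (by omega) (by ring) (by omega) (by omega)
  unfold g jv kv
  rw [hK, h.1, h.2]
  rw [if_pos (by omega : (0:ℤ) ≤ (k:ℤ))]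
  rw [Int.toNat_natCast, Int.toNat_natCast]

lemma Kv_shift_k (n k i0 : ℕ) : Kv n 0 (k+1) (n+1+i0) = Kv n 0 k i0 := by
  unfold Kv
  have h1 : ((n+1+i0 : ℕ) : ℤ) - ((0:ℕ):ℤ) = ((i0:ℤ) - ((0:ℕ):ℤ)) + 1 * ((n:ℤ)+1) := by
    push_cast; ring
  rw [h1, Int.add_mul_ediv_right _ _ (by omega : ((n:ℤ)+1) ≠ 0), Int.add_mul_emod_self_right]
  push_cast
  ring

lemma g_shift_k (n k i0 : ℕ) : g n 0 (k+1) (n+1+i0) = g n 0 k i0 := by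
  unfold g jv kv
  rw [Kv_shift_k]

lemma g_block (n k b : ℕ) (hn : 1 ≤ n) (hb : b ≤ n) :
    g n 0 (k+1) b = (k+1)^b * (k+2)^(n-b) := by
  have hK : Kv n 0 (k+1) b = (n:ℤ) * ((k:ℤ)+1) - b := by
    unfold Kv
    have hmod : ((b:ℤ) - ((0:ℕ):ℤ)) % ((n:ℤ)+1) = (b:ℤ) := by
      rw [show (b:ℤ) - ((0:ℕ):ℤ) = (b:ℤ) by push_cast; ring]
      exact Int.emod_eq_of_lt (by omega) (by omega)
    have hdiv : ((b:ℤ) - ((0:ℕ):ℤ)) / ((n:ℤ)+1) = 0 := by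
      rw [show (b:ℤ) - ((0:ℕ):ℤ) = (b:ℤ) by push_cast; ring]
      exact Int.ediv_eq_zero_of_lt (by omega) (by omega)
    rw [hmod, hdiv]
    push_cast; ring
  rcases Nat.eq_zero_or_pos b with hb0 | hbpos
  · subst hb0
    have h := dm ((n:ℤ)*((k:ℤ)+1) - ((0:ℕ):ℤ)) (n:ℤ) ((k:ℤ)+1) 0
      (by omega) (by push_cast; ring) le_rfl (by omega)
    unfold g jv kv
    rw [hK, h.1, h.2]
    rw [if_pos (by omega : (0:ℤ) ≤ (k:ℤ)+1)]
    rw [show ((k:ℤ)+1).toNat = k+1 by omega]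
    simp
  · rcases Nat.lt_or_ge b n with hbn | hbn
    · have h := dm ((n:ℤ)*((k:ℤ)+1) - b) (n:ℤ) (k:ℤ) ((n - b : ℕ) : ℤ)
        (by omega) (by push_cast [Nat.cast_sub (le_of_lt hbn)]; ring)
        (by positivity) (by push_cast [Nat.cast_sub (le_of_lt hbn)]; omega)
      unfold g jv kv
      rw [hK, h.1, h.2]
      rw [if_pos (by omega : (0:ℤ) ≤ (k:ℤ))]
      rw [Int.toNat_natCast, Int.toNat_natCast]
      rw [show n - (n - b) = b by omega]
    · have hbn' : b = n := by omega
      have h := dm ((n:ℤ)*((k:ℤ)+1) - (b:ℤ)) (n:ℤ) (k:ℤ) 0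
        (by omega) (by rw [hbn']; ring) le_rfl (by omega)
      unfold g jv kv
      rw [hK, h.1, h.2]
      rw [if_pos (by omega : (0:ℤ) ≤ (k:ℤ))]
      rw [Int.toNat_natCast]
      rw [hbn']
      simp

lemma g_zero (n j k i0 : ℕ) (hn : 1 ≤ n) (hi : (n+1)*k + j < i0) : g n j k i0 = 0 := by
  set a : ℤ := ((i0:ℤ) - j) / ((n:ℤ)+1) with ha
  set b : ℤ := ((i0:ℤ) - j) % ((n:ℤ)+1) with hb
  have hbnn : 0 ≤ b := Int.emod_nonneg _ (by omega)
  have hblt : b < (n:ℤ)+1 := Int.emod_lt_of_pos _ (by omega)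
  have hi0 : (i0:ℤ) = ((n:ℤ)+1)*a + b + (j:ℤ) := by
    have h := Int.mul_ediv_add_emod ((i0:ℤ) - (j:ℤ)) ((n:ℤ)+1)
    rw [← ha, ← hb] at h
    omega
  have hK : Kv n j k i0 = (n:ℤ)*((k:ℤ) - a) - b := rfl
  have hcast : ((n:ℤ)+1)*(k:ℤ) + (j:ℤ) < (i0:ℤ) := by exact_mod_cast hi
  have hKneg : Kv n j k i0 < 0 := by
    rw [hK]
    rcases le_or_gt a (k:ℤ) with hak | hak
    · have h1 : ((n:ℤ)+1)*((k:ℤ)-a) < b := by nlinarith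
      have h2 : (n:ℤ)*((k:ℤ)-a) ≤ ((n:ℤ)+1)*((k:ℤ)-a) := by nlinarith
      linarith
    · have : (n:ℤ)*((k:ℤ)-a) ≤ (n:ℤ)*(-1) :=
        mul_le_mul_of_nonneg_left (by omega) (by omega)
      linarith
  unfold g kv
  rw [if_neg (not_le.mpr (Int.ediv_neg_of_neg_of_pos hKneg (by omega)))]

lemma g_base (n : ℕ) : g n 0 0 0 = 1 := by
  have hK : Kv n 0 0 0 = 0 := by
    unfold Kv
    norm_num
  unfold g jv kv
  rw [hK]
  norm_num

lemma geomZ (k n : ℕ) :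
    (∑ b ∈ Finset.range (n+1), ((k:ℤ)+1)^b * ((k:ℤ)+2)^(n-b)) + ((k:ℤ)+1)^(n+1)
      = ((k:ℤ)+2)^(n+1) := by
  have h := geom_sum₂_mul ((k:ℤ)+1) ((k:ℤ)+2) (n+1)
  simp only [Nat.add_sub_cancel] at h
  linarith

lemma geomN (k n : ℕ) :
    ∑ b ∈ Finset.range (n+1), (k+1)^b * (k+2)^(n-b) + (k+1)^(n+1) = (k+2)^(n+1) := by
  exact_mod_cast geomZ k n

lemma sumA (n : ℕ) (hn : 1 ≤ n) :
    ∀ k, ∑ i0 ∈ Finset.range ((n+1)*k + 1), g n 0 k i0 = (k+1)^(n+1) := by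
  intro k
  induction k with
  | zero => simpa using g_base n
  | succ m ih =>
      rw [show (n+1)*(m+1) + 1 = (n+1) + ((n+1)*m + 1) by ring, Finset.sum_range_add]
      have h1 : ∑ x ∈ Finset.range ((n+1)*m + 1), g n 0 (m+1) (n+1+x)
          = ∑ x ∈ Finset.range ((n+1)*m + 1), g n 0 m x :=
        Finset.sum_congr rfl (fun x _ => g_shift_k n m x)
      have h2 : ∑ x ∈ Finset.range (n+1), g n 0 (m+1) x
          = ∑ x ∈ Finset.range (n+1), (m+1)^x * (m+2)^(n-x) :=
        Finset.sum_congr rfl (fun x hx => g_block n m x hn (by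
          have := Finset.mem_range.mp hx; omega))
      rw [h1, h2, ih, show m+1+1 = m+2 from rfl]
      exact geomN m n
lemma sumC (n k : ℕ) (hn : 1 ≤ n) : ∀ j, j < n + 1 →
    ∑ i0 ∈ Finset.range ((n+1)*k + j + 1), g n j k i0 = (k+1)^(n+1-j) * (k+2)^j := by
  intro j
  induction j with
  | zero => intro _; simpa using sumA n hn k
  | succ m ih =>
      intro hm
      rw [show (n+1)*k + (m+1) + 1 = ((n+1)*k + m + 1) + 1 by ring, Finset.sum_range_succ']
      have h1 : ∑ i ∈ Finset.range ((n+1)*k + m + 1), g n (m+1) k (i+1)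
          = ∑ i ∈ Finset.range ((n+1)*k + m + 1), g n m k i :=
        Finset.sum_congr rfl (fun i _ => g_shift_j n m k i)
      rw [h1, ih (by omega), g_head n m k (by omega),
        show n+1-(m+1) = n - m by omega, show n+1-m = (n-m)+1 by omega, pow_succ, pow_succ]
      ring
lemma sumD (n k j M : ℕ) (hn : 1 ≤ n) (hj : j < n + 1) (hM : (n+1)*k + j ≤ M) :
    ∑ i0 ∈ Finset.range (M + 1), g n j k i0 = (k+1)^(n+1-j) * (k+2)^j := by
  rw [← sumC n k hn j hj]
  symm
  apply Finset.sum_subset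
  · intro i hi
    simp only [Finset.mem_range] at *
    omega
  · intro i hi hni
    simp only [Finset.mem_range] at *
    exact g_zero n j k i hn (by omega)
def SF (N j k : ℕ) : Finset (Fin N → ℕ) :=
  (Fintype.piFinset (fun _ : Fin N =>
      Finset.range (N.factorial * k + j * (N-1).factorial + 1))).filter
    (fun x => CondN N j k (ext x))

lemma condN_bound {N j k : ℕ} {x : Fin N → ℕ} (h : CondN N j k (ext x)) (p : Fin N) :
    x p ≤ N.factorial * k + j * (N-1).factorial := by
  unfold CondN at h
  have hmem : (p : ℕ) ∈ Finset.range N := Finset.mem_range.mpr p.isLt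
  have hterm : (N.factorial / (N - (p:ℕ))) * ext x (p:ℕ)
      ≤ ∑ q ∈ Finset.range N, (N.factorial/(N-q)) * ext x q :=
    Finset.single_le_sum (f := fun q => N.factorial / (N - q) * ext x q)
      (fun q _ => Nat.zero_le _) hmem
  have hcoef : 1 ≤ N.factorial / (N - (p:ℕ)) := by
    have h1 : 0 < N - (p:ℕ) := by have := p.isLt; omega
    have h2 : N - (p:ℕ) ≤ N.factorial := le_trans (by omega) (Nat.self_le_factorial N)
    exact (Nat.one_le_div_iff h1).mpr h2
  have hx : ext x (p:ℕ) = x p := by rw [ext_lt x p.isLt]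
  have hxle : x p ≤ (N.factorial / (N - (p:ℕ))) * ext x (p:ℕ) := by
    rw [hx]
    calc x p = 1 * x p := (one_mul _).symm
    _ ≤ (N.factorial / (N - (p:ℕ))) * x p := Nat.mul_le_mul_right _ hcoef
  omega

lemma mem_SF {N j k : ℕ} {x : Fin N → ℕ} : x ∈ SF N j k ↔ CondN N j k (ext x) := by
  unfold SF
  rw [Finset.mem_filter]
  constructor
  · exact fun h => h.2
  · intro h
    refine ⟨Fintype.mem_piFinset.mpr (fun p => ?_), h⟩
    exact Finset.mem_range.mpr (by have := condN_bound h p; omega)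

lemma Sset_eq_SF {N j k : ℕ} : Sset N j k = ↑(SF N j k) := by
  ext x
  rw [Finset.mem_coe, mem_SF, mem_Sset_iff, cond_iff]

lemma card_SF_one (j k : ℕ) (hj : j < 1) : (SF 1 j k).card = k + 1 := by
  have hj0 : j = 0 := by omega
  subst hj0
  have hcond : ∀ x : Fin 1 → ℕ, CondN 1 0 k (ext x) ↔ x 0 ≤ k := by
    intro x
    unfold CondN
    rw [show (1:ℕ) - 3 = 0 from rfl, Finset.range_zero, Finset.sum_empty, Finset.sum_range_one]
    rw [ext_lt x (by omega : 0 < 1)]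
    simp [Nat.factorial]
  have hmem : ∀ x ∈ Fintype.piFinset
      (fun _ : Fin 1 => Finset.range (Nat.factorial 1 * k + 0 * (1-1).factorial + 1)),
      CondN 1 0 k (ext x) := by
    intro x hx
    rw [hcond]
    have := Fintype.mem_piFinset.mp hx 0
    simp [Nat.factorial] at this
    omega
  unfold SF
  rw [Finset.filter_true_of_mem hmem, Fintype.card_piFinset]
  simp [Nat.factorial]

theorem card_SF_main : ∀ n : ℕ, ∀ j k : ℕ, j < n + 1 →
    (SF (n+1) j k).card = (k+1)^(n+1-j) * (k+2)^j := by
  intro n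
  induction n with
  | zero =>
      intro j k hj
      rw [card_SF_one j k hj]
      have : j = 0 := by omega
      subst this
      simp
  | succ m IH =>
      intro j k hj
      obtain ⟨Bd, hBd⟩ : ∃ B, B = (m+2).factorial * k + j * (m+2-1).factorial := ⟨_, rfl⟩
      have h1 : (SF (m+2) j k).card
          = ∑ i0 ∈ Finset.range (Bd+1),
              ((SF (m+2) j k).filter (fun x => x 0 = i0)).card := by
        apply Finset.card_eq_sum_card_fiberwise
        intro x hx
        rw [hBd]
        exact Fintype.mem_piFinset.mp (Finset.mem_filter.mp hx).1 0
      have h2 : ∀ i0 : ℕ, ((SF (m+2) j k).filter (fun x => x 0 = i0)).card = g (m+1) j k i0 := by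
        intro i0
        have hpeel := @peel (m+1) j k (Nat.succ_le_succ (Nat.zero_le m))
        by_cases hkv : 0 ≤ kv (m+1) j k i0
        · have hbij : ((SF (m+2) j k).filter (fun x => x 0 = i0)).card
              = (SF (m+1) (jv (m+1) j k i0) ((kv (m+1) j k i0).toNat)).card := by
            apply Finset.card_nbij' (fun x => Fin.tail x) (fun y => Fin.cons i0 y)
            · intro x hx
              obtain ⟨hx1, hx2⟩ := Finset.mem_filter.mp hx
              have hc := mem_SF.mp hx1
              have hp := (hpeel x).mp hc
              rw [hx2] at hp
              exact mem_SF.mpr hp.2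
            · intro y hy
              have hc := mem_SF.mp hy
              apply Finset.mem_filter.mpr
              refine ⟨mem_SF.mpr ?_, ?_⟩
              · apply (hpeel (Fin.cons i0 y)).mpr
                rw [Fin.cons_zero, Fin.tail_cons]
                exact ⟨hkv, hc⟩
              · exact Fin.cons_zero (α := fun _ => ℕ) i0 y
            · intro x hx
              have hx2 := (Finset.mem_filter.mp hx).2
              rw [← hx2]
              exact Fin.cons_self_tail (α := fun _ => ℕ) x
            · intro y hy
              exact Fin.tail_cons (α := fun _ => ℕ) i0 y
          rw [hbij, IH _ _ (jv_lt (Nat.succ_le_succ (Nat.zero_le m)))]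
          unfold g
          rw [if_pos hkv]
        · have hempty : (SF (m+2) j k).filter (fun x => x 0 = i0) = ∅ := by
            apply Finset.eq_empty_of_forall_notMem
            intro x hx
            obtain ⟨hx1, hx2⟩ := Finset.mem_filter.mp hx
            have hc := mem_SF.mp hx1
            have hp := (hpeel x).mp hc
            rw [hx2] at hp
            exact hkv hp.1
          rw [hempty]
          unfold g
          rw [if_neg hkv]
          simp
      rw [h1, Finset.sum_congr rfl (fun i0 _ => h2 i0)]
      apply sumD (m+1) k j Bd (Nat.succ_le_succ (Nat.zero_le m)) hj
      have hf1 : m+2 ≤ (m+2).factorial := Nat.self_le_factorial (m+2)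
      have hf2 : 1 ≤ (m+2-1).factorial := Nat.factorial_pos _
      have h3 : (m+2)*k ≤ (m+2).factorial * k := Nat.mul_le_mul_right k hf1
      have h4 : j*1 ≤ j*(m+2-1).factorial := Nat.mul_le_mul_left j hf2
      clear h1 h2 IH
      show (m+2)*k + j ≤ Bd
      omega
end SP

/-- The cardinality of `S(k^{N−j},(k+1)^j)` equals `(k+1)^{N−j}·(k+2)^j`, the dimension
of the fusion product `V(k)^{*(N−j)} * V(k+1)^{*j}` of `sl₂`-modules. -/
theorem Sset_card (N j k : ℕ) (hN : 1 ≤ N) (hj : j < N) :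
    Nat.card (Sset N j k) = (k + 1) ^ (N - j) * (k + 2) ^ j := by
  obtain ⟨n, rfl⟩ : ∃ n, N = n + 1 := ⟨N - 1, by omega⟩
  rw [SP.Sset_eq_SF, Nat.card_coe_set_eq, Set.ncard_coe_finset]
  exact SP.card_SF_main n j k hj
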